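/- Let D = 2k be even, let M ∈ ℝ^{D×D} be the block-swap matrix [[0, I_k],[I_k, 0]], let L ≥ 1, let U₁, U₂, U₃, U₄ ∈ ℝ^{L×D}, and let β₁, …, β₁₂ ∈ ℝ. Define W ∈ ℝ^{4D×4D} in D×D blocks whose (1,1), (1,3), (3,1), (3,3) blocks are β₁·I, β₂·I, β₇·I, β₈·I respectively, whose (2,2), (2,4), (4,2), (4,4) blocks are β₃·I + β₄·M, β₅·I + β₆·M, β₉·I + β₁₀·M, β₁₁·I + β₁₂·M respectively, and whose remaining blocks are zero. Then for every orthogonal matrix E ∈ ℝ^{D×D} and every block-orthogonal matrix F ∈ ℝ^{D×D} (with respect to the split D = k + k), the matrix of second-layer attention scores is invariant under the data rotation: [U₁·E | U₂·F | U₃·E | U₄·F]·W·[U₁·E | U₂·F | U₃·E | U₄·F]ᵀ = [U₁ | U₂ | U₃ | U₄]·W·[U₁ | U₂ | U₃ | U₄]ᵀ, where [· | ·] denotes horizontal concatenation of matrices. -/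

import Mathlib

open Matrix

/-- A matrix `E` is orthogonal if `E·Eᵀ = Eᵀ·E = 1`. -/
def IsOrthoMat {m : Type*} [Fintype m] [DecidableEq m] (E : Matrix m m ℝ) : Prop :=
  E * Eᵀ = 1 ∧ Eᵀ * E = 1

/-- A `2k×2k` matrix `F` is block-orthogonal if, for some orthogonal `k×k` matrix `E₀`,
either `F = [[E₀,0],[0,E₀]]` or `F = [[0,E₀],[E₀,0]]` in `k×k` blocks. -/
def IsBlockOrthoMat {k : ℕ} (F : Matrix (Fin k ⊕ Fin k) (Fin k ⊕ Fin k) ℝ) : Prop :=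
  ∃ E₀ : Matrix (Fin k) (Fin k) ℝ, IsOrthoMat E₀ ∧
    (F = Matrix.fromBlocks E₀ 0 0 E₀ ∨ F = Matrix.fromBlocks 0 E₀ E₀ 0)

/-- Index type for `ℝ^D` with `D = 2k` split as `k + k`. -/
abbrev DIx (k : ℕ) := Fin k ⊕ Fin k

/-- The block-swap matrix `M = [[0, I_k],[I_k, 0]]` on `ℝ^D` with `D = 2k`. -/
def blockSwap (k : ℕ) : Matrix (DIx k) (DIx k) ℝ :=
  Matrix.fromBlocks 0 1 1 0

/-- The structured second-layer weight matrix `W ∈ ℝ^{4D×4D}`, in `D×D` blocks: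
blocks (1,1)=β₁I, (1,3)=β₂I, (3,1)=β₇I, (3,3)=β₈I, (2,2)=β₃I+β₄M, (2,4)=β₅I+β₆M,
(4,2)=β₉I+β₁₀M, (4,4)=β₁₁I+β₁₂M, all other blocks zero.  Rows and columns are grouped
as ((1,2),(3,4)). -/
def Wsecond (k : ℕ) (β₁ β₂ β₃ β₄ β₅ β₆ β₇ β₈ β₉ β₁₀ β₁₁ β₁₂ : ℝ) :
    Matrix ((DIx k ⊕ DIx k) ⊕ (DIx k ⊕ DIx k)) ((DIx k ⊕ DIx k) ⊕ (DIx k ⊕ DIx k)) ℝ :=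
  Matrix.fromBlocks
    (Matrix.fromBlocks (β₁ • 1) 0 0 (β₃ • 1 + β₄ • blockSwap k))
    (Matrix.fromBlocks (β₂ • 1) 0 0 (β₅ • 1 + β₆ • blockSwap k))
    (Matrix.fromBlocks (β₇ • 1) 0 0 (β₉ • 1 + β₁₀ • blockSwap k))
    (Matrix.fromBlocks (β₈ • 1) 0 0 (β₁₁ • 1 + β₁₂ • blockSwap k))


lemma FFt {k : ℕ} {F : Matrix (Fin k ⊕ Fin k) (Fin k ⊕ Fin k) ℝ} (hF : IsBlockOrthoMat F) :
    F * Fᵀ = 1 := by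
  obtain ⟨E₀, ⟨h1, h2⟩, h | h⟩ := hF <;> subst h <;>
    simp [Matrix.fromBlocks_transpose, Matrix.fromBlocks_multiply, h1, ← Matrix.fromBlocks_one]

lemma FMFt {k : ℕ} {F : Matrix (Fin k ⊕ Fin k) (Fin k ⊕ Fin k) ℝ} (hF : IsBlockOrthoMat F) :
    F * blockSwap k * Fᵀ = blockSwap k := by
  obtain ⟨E₀, ⟨h1, h2⟩, h | h⟩ := hF <;> subst h <;>
    simp [blockSwap, Matrix.fromBlocks_transpose, Matrix.fromBlocks_multiply, h1]

lemma conjP {k : ℕ} {E F : Matrix (DIx k) (DIx k) ℝ} (hE : IsOrthoMat E)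
    (hF : IsBlockOrthoMat F) (a b c : ℝ) :
    Matrix.fromBlocks E 0 0 F * Matrix.fromBlocks (a • 1) 0 0 (b • 1 + c • blockSwap k) *
      (Matrix.fromBlocks E 0 0 F)ᵀ =
    Matrix.fromBlocks (a • 1) 0 0 (b • 1 + c • blockSwap k) := by
  have h1 : E * (a • 1) * Eᵀ = a • 1 := by
    simp only [Matrix.mul_smul, Matrix.smul_mul, mul_one]
    rw [hE.1]
  have h2 : F * (b • 1 + c • blockSwap k) * Fᵀ = b • 1 + c • blockSwap k := by
    simp only [mul_add, add_mul, Matrix.mul_smul, Matrix.smul_mul, mul_one]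
    rw [FFt hF, FMFt hF]
  rw [Matrix.fromBlocks_transpose, Matrix.fromBlocks_multiply, Matrix.fromBlocks_multiply]
  simp only [Matrix.mul_zero, Matrix.zero_mul, add_zero, zero_add, Matrix.transpose_zero]
  rw [h1, h2]

/-- Invariance of the second-layer attention scores under data rotations: for every
orthogonal `E` and block-orthogonal `F`,
`[U₁·E | U₂·F | U₃·E | U₄·F]·W·[U₁·E | U₂·F | U₃·E | U₄·F]ᵀ = [U₁|U₂|U₃|U₄]·W·[U₁|U₂|U₃|U₄]ᵀ`. -/
theorem stmt5 (k : ℕ) (hk : 1 ≤ k) (L : ℕ) (hL : 1 ≤ L)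
    (U₁ U₂ U₃ U₄ : Matrix (Fin L) (DIx k) ℝ)
    (β₁ β₂ β₃ β₄ β₅ β₆ β₇ β₈ β₉ β₁₀ β₁₁ β₁₂ : ℝ)
    (E : Matrix (DIx k) (DIx k) ℝ) (hE : IsOrthoMat E)
    (F : Matrix (DIx k) (DIx k) ℝ) (hF : IsBlockOrthoMat F) :
    Matrix.fromCols (Matrix.fromCols (U₁ * E) (U₂ * F))
        (Matrix.fromCols (U₃ * E) (U₄ * F)) *
      Wsecond k β₁ β₂ β₃ β₄ β₅ β₆ β₇ β₈ β₉ β₁₀ β₁₁ β₁₂ *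
      (Matrix.fromCols (Matrix.fromCols (U₁ * E) (U₂ * F))
        (Matrix.fromCols (U₃ * E) (U₄ * F)))ᵀ =
    Matrix.fromCols (Matrix.fromCols U₁ U₂) (Matrix.fromCols U₃ U₄) *
      Wsecond k β₁ β₂ β₃ β₄ β₅ β₆ β₇ β₈ β₉ β₁₀ β₁₁ β₁₂ *
      (Matrix.fromCols (Matrix.fromCols U₁ U₂) (Matrix.fromCols U₃ U₄))ᵀ := by
  
  obtain ⟨hE1, hE2⟩ := hE
  set W := Wsecond k β₁ β₂ β₃ β₄ β₅ β₆ β₇ β₈ β₉ β₁₀ β₁₁ β₁₂ with hW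
  set P : Matrix (DIx k ⊕ DIx k) (DIx k ⊕ DIx k) ℝ := Matrix.fromBlocks E 0 0 F with hP
  set G : Matrix ((DIx k ⊕ DIx k) ⊕ (DIx k ⊕ DIx k)) ((DIx k ⊕ DIx k) ⊕ (DIx k ⊕ DIx k)) ℝ :=
    Matrix.fromBlocks P 0 0 P with hG
  have hfac : Matrix.fromCols (Matrix.fromCols (U₁ * E) (U₂ * F))
      (Matrix.fromCols (U₃ * E) (U₄ * F)) =
      Matrix.fromCols (Matrix.fromCols U₁ U₂) (Matrix.fromCols U₃ U₄) * G := by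
    simp [hG, hP, Matrix.fromCols_mul_fromBlocks]
  have hGW : G * W * Gᵀ = W := by
    simp only [hG, hW, Wsecond, Matrix.fromBlocks_transpose, Matrix.fromBlocks_multiply,
      Matrix.mul_zero, Matrix.zero_mul, add_zero, zero_add, Matrix.transpose_zero]
    rw [hP, conjP ⟨hE1, hE2⟩ hF, conjP ⟨hE1, hE2⟩ hF, conjP ⟨hE1, hE2⟩ hF,
      conjP ⟨hE1, hE2⟩ hF]
  rw [hfac, Matrix.transpose_mul]
  conv_rhs => rw [← hGW]
  simp only [Matrix.mul_assoc]
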